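/- Let f : ℝⁿ → ℝ be convex with L-Lipschitz gradient, minimizer x⋆, and 0 < s ≤ 1/L. Define x₀ = y₀, y_{k+1} = x_k - s∇f(x_k), x_{k+1} = y_{k+1} + (k/(k+3))(y_{k+1} - y_k) - s((k/(k+3))∇f(y_{k+1}) - ((k-1)/(k+3))∇f(y_k)). Then for all k ≥ 0: min_{0≤i≤k} ‖∇f(x_i) + ∇f(y_i)‖² ≤ 882‖x₀ - x⋆‖²/(s²(k+1)³) and f(y_k) - f(x⋆) ≤ 21‖x₀ - x⋆‖²/(s(k+1)²). -/

import Mathlib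

open Set
open scoped RealInnerProductSpace

section aux
variable {F : Type*} [NormedAddCommGroup F] [InnerProductSpace ℝ F] [CompleteSpace F]
variable {f : F → ℝ} {g : F → F}

lemma nagc_line_deriv (hgrad : ∀ x, HasGradientAt f (g x) x) (a v : F) (t : ℝ) :
    HasDerivAt (fun t : ℝ => f (a + t • v)) ⟪g (a + t • v), v⟫ t := by
  have hc : HasDerivAt (fun t : ℝ => a + t • v) v t := by
    simpa using ((hasDerivAt_id t).smul_const v).const_add a
  have h := (hasGradientAt_iff_hasFDerivAt.mp (hgrad (a + t • v))).comp_hasDerivAt t hc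
  simpa [InnerProductSpace.toDual_apply_apply, Function.comp_def] using h

lemma nagc_descent (hgrad : ∀ x, HasGradientAt f (g x) x) {L : ℝ} (hL : 0 < L)
    (hlip : ∀ a b, ‖g a - g b‖ ≤ L * ‖a - b‖) (a b : F) :
    f b ≤ f a + ⟪g a, b - a⟫ + L / 2 * ‖b - a‖ ^ 2 := by
  set v := b - a with hv
  set H : ℝ → ℝ := fun t => f (a + t • v) - t * ⟪g a, v⟫ - L * t ^ 2 / 2 * ‖v‖ ^ 2 with hH
  have hd : ∀ t : ℝ, HasDerivAt H (⟪g (a + t • v), v⟫ - ⟪g a, v⟫ - L * t * ‖v‖ ^ 2) t := by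
    intro t
    have h1 := nagc_line_deriv hgrad a v t
    have h2 : HasDerivAt (fun t : ℝ => t * ⟪g a, v⟫) ⟪g a, v⟫ t := by
      simpa using (hasDerivAt_id t).mul_const ⟪g a, v⟫
    have h3 : HasDerivAt (fun t : ℝ => L * t ^ 2 / 2 * ‖v‖ ^ 2) (L * t * ‖v‖ ^ 2) t := by
      have h := (hasDerivAt_pow 2 t).const_mul (L / 2 * ‖v‖ ^ 2)
      have he : (fun t : ℝ => L * t ^ 2 / 2 * ‖v‖ ^ 2)
          = fun t : ℝ => L / 2 * ‖v‖ ^ 2 * t ^ 2 := by funext u; ring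
      rw [he]
      refine h.congr_deriv ?_
      push_cast
      ring
    exact (h1.sub h2).sub h3
  have hdiff : Differentiable ℝ H := fun t => (hd t).differentiableAt
  have hmono : AntitoneOn H (Icc (0:ℝ) 1) := by
    apply antitoneOn_of_deriv_nonpos (convex_Icc 0 1) hdiff.continuous.continuousOn
      hdiff.differentiableOn
    intro t ht
    rw [interior_Icc] at ht
    rw [(hd t).deriv]
    have hle : ⟪g (a + t • v), v⟫ - ⟪g a, v⟫ ≤ L * t * ‖v‖ ^ 2 := by
      rw [← inner_sub_left]
      calc ⟪g (a + t • v) - g a, v⟫ ≤ ‖g (a + t • v) - g a‖ * ‖v‖ := real_inner_le_norm _ _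
        _ ≤ (L * ‖(a + t • v) - a‖) * ‖v‖ := by
            gcongr
            exact hlip _ _
        _ = L * t * ‖v‖ ^ 2 := by
            have : (a + t • v) - a = t • v := by abel
            rw [this, norm_smul, Real.norm_eq_abs, abs_of_pos ht.1]
            ring
    linarith
  have h10 : H 1 ≤ H 0 := hmono (by norm_num) (by norm_num) zero_le_one
  have h0 : H 0 = f a := by simp [hH]
  have h1 : H 1 = f b - ⟪g a, v⟫ - L / 2 * ‖v‖ ^ 2 := by
    have hab : a + (1:ℝ) • v = b := by rw [hv]; module
    simp only [hH]
    rw [hab]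
    ring
  rw [h0, h1] at h10
  linarith

lemma nagc_convex_ineq (hgrad : ∀ x, HasGradientAt f (g x) x)
    (hconv : ConvexOn ℝ Set.univ f) (a b : F) :
    f a + ⟪g a, b - a⟫ ≤ f b := by
  have hφ : ConvexOn ℝ Set.univ (fun t : ℝ => f (a + t • (b - a))) := by
    have h := hconv.comp_affineMap (AffineMap.lineMap a b)
    have he : (fun t : ℝ => f (a + t • (b - a))) = f ∘ (AffineMap.lineMap a b : ℝ →ᵃ[ℝ] F) := by
      funext t
      simp [AffineMap.lineMap_apply, add_comm]
    rw [he]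
    simpa using h
  have hd : HasDerivAt (fun t : ℝ => f (a + t • (b - a))) ⟪g a, b - a⟫ 0 := by
    simpa using nagc_line_deriv hgrad a (b - a) 0
  have hs := hφ.le_slope_of_hasDerivAt (mem_univ (0:ℝ)) (mem_univ 1) one_pos hd
  rw [slope_def_field] at hs
  simp at hs
  linarith

lemma nagc_lower (hgrad : ∀ x, HasGradientAt f (g x) x)
    (hconv : ConvexOn ℝ Set.univ f) {L : ℝ} (hL : 0 < L)
    (hlip : ∀ a b, ‖g a - g b‖ ≤ L * ‖a - b‖) (a b : F) :
    f a + ⟪g a, b - a⟫ + 1 / (2 * L) * ‖g b - g a‖ ^ 2 ≤ f b := by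
  set z := b - (1 / L) • (g b - g a) with hz
  have h1 := nagc_convex_ineq hgrad hconv a z
  have h2 := nagc_descent hgrad hL hlip b z
  have hza : z - a = (b - a) - (1 / L) • (g b - g a) := by rw [hz]; module
  have hzb : z - b = -((1 / L) • (g b - g a)) := by rw [hz]; module
  rw [hza] at h1
  rw [hzb] at h2
  rw [inner_sub_right, real_inner_smul_right] at h1
  rw [inner_neg_right, real_inner_smul_right, norm_neg, norm_smul, Real.norm_eq_abs,
    abs_of_pos (by positivity : (0:ℝ) < 1 / L)] at h2
  have key : ⟪g b, g b - g a⟫ - ⟪g a, g b - g a⟫ = ‖g b - g a‖ ^ 2 := by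
    rw [← inner_sub_left, real_inner_self_eq_norm_sq]
  have hL' : L ≠ 0 := ne_of_gt hL
  have e1 : L / 2 * (1 / L * ‖g b - g a‖) ^ 2 = 1 / (2 * L) * ‖g b - g a‖ ^ 2 := by
    field_simp
  rw [e1] at h2
  have e2 : (1:ℝ) / L * ⟪g b, g b - g a⟫ - 1 / L * ⟪g a, g b - g a⟫
      = 1 / L * ‖g b - g a‖ ^ 2 := by rw [← mul_sub, key]
  have e3 : (1:ℝ) / L * ‖g b - g a‖ ^ 2 - 1 / (2 * L) * ‖g b - g a‖ ^ 2
      = 1 / (2 * L) * ‖g b - g a‖ ^ 2 := by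
    field_simp
    ring
  linarith

noncomputable def nagW (g : F → F) (s : ℝ) (x y : ℕ → F) (xstar : F) (k : ℕ) : F :=
  (((k:ℝ) + 2) / 2) • x k - ((k:ℝ) / 2) • y k + ((((k:ℝ) - 1) * s) / 2) • g (y k) - xstar

noncomputable def nagE (f : F → ℝ) (g : F → F) (s : ℝ) (x y : ℕ → F) (xstar : F) (k : ℕ) : ℝ :=
  s * ((k:ℝ) + 1) ^ 2 / 4 * (f (y k) - f xstar) + ‖nagW g s x y xstar k‖ ^ 2 / 2

lemma nag_step (hgrad : ∀ x, HasGradientAt f (g x) x)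
    (hconv : ConvexOn ℝ Set.univ f) {L s : ℝ} (hL : 0 < L)
    (hlip : ∀ a b, ‖g a - g b‖ ≤ L * ‖a - b‖)
    (xstar : F) (hgstar : g xstar = 0)
    (hs : 0 < s) (hsL : s ≤ 1 / L)
    (x y : ℕ → F)
    (hyk : ∀ k : ℕ, y (k + 1) = x k - s • g (x k))
    (hxk : ∀ k : ℕ, x (k + 1) = y (k + 1) + ((k : ℝ) / ((k : ℝ) + 3)) • (y (k + 1) - y k)
          - s • (((k : ℝ) / ((k : ℝ) + 3)) • g (y (k + 1))
                  - (((k : ℝ) - 1) / ((k : ℝ) + 3)) • g (y k)))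
    (k : ℕ) :
    nagE f g s x y xstar (k + 1) + s / 4 * (f (y k) - f xstar)
      + s ^ 2 * (((k:ℝ) ^ 2 + 2 * (k:ℝ) - 1) / 16) * ‖g (x k) + g (y k)‖ ^ 2
      + s ^ 2 * ‖(((k:ℝ) + 3) / 4) • g (x k) - (((k:ℝ) + 1) / 4) • g (y k)‖ ^ 2
      ≤ nagE f g s x y xstar k := by
  have hLs : s * L ≤ 1 := (le_div_iff₀ hL).mp hsL
  have hκ : (0:ℝ) ≤ (k:ℝ) := Nat.cast_nonneg k
  -- w recursion
  have hw : nagW g s x y xstar (k + 1) - nagW g s x y xstar k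
      = (-(s * ((k:ℝ) + 2) / 2)) • g (x k) := by
    have h3 : ((k:ℝ) + 3) ≠ 0 := by positivity
    simp only [nagW]
    push_cast
    rw [hxk k, hyk k]
    match_scalars <;> field_simp <;> ring
  have hww : nagW g s x y xstar (k + 1)
      = nagW g s x y xstar k + (-(s * ((k:ℝ) + 2) / 2)) • g (x k) := by
    have := sub_eq_iff_eq_add.mp hw
    rw [this]; abel
  have hnorm : ‖nagW g s x y xstar (k + 1)‖ ^ 2
      = ‖nagW g s x y xstar k‖ ^ 2
        - s * ((k:ℝ) + 2) * ⟪g (x k), nagW g s x y xstar k⟫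
        + s ^ 2 * ((k:ℝ) + 2) ^ 2 / 4 * ‖g (x k)‖ ^ 2 := by
    rw [hww, norm_add_sq_real, real_inner_smul_right, real_inner_comm, norm_smul,
      Real.norm_eq_abs]
    rw [mul_pow, sq_abs]
    ring
  have hv : nagW g s x y xstar k
      = (x k - xstar) + ((k:ℝ) / 2) • (x k - y k) + ((((k:ℝ) - 1) * s) / 2) • g (y k) := by
    simp only [nagW]
    module
  have hinner : ⟪g (x k), nagW g s x y xstar k⟫
      = ⟪g (x k), x k - xstar⟫ + (k:ℝ) / 2 * ⟪g (x k), x k - y k⟫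
        + ((k:ℝ) - 1) * s / 2 * ⟪g (x k), g (y k)⟫ := by
    rw [hv]
    rw [inner_add_right, inner_add_right, real_inner_smul_right, real_inner_smul_right]
    try ring
  -- descent inequality I1
  have I1 : f (y (k + 1)) ≤ f (x k) - s / 2 * ‖g (x k)‖ ^ 2 := by
    have hb := nagc_descent hgrad hL hlip (x k) (y (k + 1))
    have hd : y (k + 1) - x k = (-s) • g (x k) := by rw [hyk k]; module
    rw [hd, real_inner_smul_right, real_inner_self_eq_norm_sq, norm_smul,
      Real.norm_eq_abs, mul_pow, sq_abs] at hb
    nlinarith [hb, mul_nonneg (mul_nonneg (sub_nonneg.mpr hLs) hs.le) (sq_nonneg ‖g (x k)‖)]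
  -- I2
  have I2 : f (x k) ≤ f xstar + ⟪g (x k), x k - xstar⟫ - s / 2 * ‖g (x k)‖ ^ 2 := by
    have hc := nagc_lower hgrad hconv hL hlip (x k) xstar
    rw [hgstar, zero_sub, norm_neg] at hc
    rw [show xstar - x k = -(x k - xstar) from (neg_sub _ _).symm, inner_neg_right] at hc
    have h1L : s / 2 * ‖g (x k)‖ ^ 2 ≤ 1 / (2 * L) * ‖g (x k)‖ ^ 2 := by
      have hsl : s / 2 ≤ 1 / (2 * L) := by
        rw [div_le_div_iff₀ two_pos (by positivity)]
        calc s * (2 * L) = (s * L) * 2 := by ring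
          _ ≤ 1 * 2 := by nlinarith
          _ = 1 * 2 := rfl
      exact mul_le_mul_of_nonneg_right hsl (sq_nonneg _)
    linarith
  -- I3
  have I3 : f (x k) ≤ f (y k) + ⟪g (x k), x k - y k⟫
      - s / 2 * (‖g (x k)‖ ^ 2 - 2 * ⟪g (x k), g (y k)⟫ + ‖g (y k)‖ ^ 2) := by
    have hc := nagc_lower hgrad hconv hL hlip (x k) (y k)
    rw [show y k - x k = -(x k - y k) from (neg_sub _ _).symm, inner_neg_right] at hc
    rw [show g (y k) - g (x k) = -(g (x k) - g (y k)) from (neg_sub _ _).symm, norm_neg] at hc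
    rw [norm_sub_sq_real] at hc
    have h1L : s / 2 * (‖g (x k)‖ ^ 2 - 2 * ⟪g (x k), g (y k)⟫ + ‖g (y k)‖ ^ 2)
        ≤ 1 / (2 * L) * (‖g (x k)‖ ^ 2 - 2 * ⟪g (x k), g (y k)⟫ + ‖g (y k)‖ ^ 2) := by
      have hsl : s / 2 ≤ 1 / (2 * L) := by
        rw [div_le_div_iff₀ two_pos (by positivity)]
        nlinarith
      have hnn : (0:ℝ) ≤ ‖g (x k)‖ ^ 2 - 2 * ⟪g (x k), g (y k)⟫ + ‖g (y k)‖ ^ 2 := by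
        rw [← norm_sub_sq_real]
        positivity
      exact mul_le_mul_of_nonneg_right hsl hnn
    linarith
  -- expansions
  have eGH : ‖g (x k) + g (y k)‖ ^ 2
      = ‖g (x k)‖ ^ 2 + 2 * ⟪g (x k), g (y k)⟫ + ‖g (y k)‖ ^ 2 := norm_add_sq_real _ _
  have ePS : ‖(((k:ℝ) + 3) / 4) • g (x k) - (((k:ℝ) + 1) / 4) • g (y k)‖ ^ 2
      = (((k:ℝ) + 3) / 4) ^ 2 * ‖g (x k)‖ ^ 2
        - 2 * ((((k:ℝ) + 3) / 4) * (((k:ℝ) + 1) / 4)) * ⟪g (x k), g (y k)⟫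
        + (((k:ℝ) + 1) / 4) ^ 2 * ‖g (y k)‖ ^ 2 := by
    rw [norm_sub_sq_real, norm_smul, norm_smul, real_inner_smul_left, real_inner_smul_right,
      Real.norm_eq_abs, Real.norm_eq_abs, mul_pow, mul_pow, sq_abs, sq_abs]
    ring
  -- scaled inequalities
  have J1 : s * ((k:ℝ) + 2) ^ 2 / 4 * f (y (k + 1))
      ≤ s * ((k:ℝ) + 2) ^ 2 / 4 * (f (x k) - s / 2 * ‖g (x k)‖ ^ 2) :=
    mul_le_mul_of_nonneg_left I1 (by positivity)
  have J2 : s * ((k:ℝ) + 2) / 2 * f (x k)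
      ≤ s * ((k:ℝ) + 2) / 2 * (f xstar + ⟪g (x k), x k - xstar⟫ - s / 2 * ‖g (x k)‖ ^ 2) :=
    mul_le_mul_of_nonneg_left I2 (by positivity)
  have J3 : s * (k:ℝ) * ((k:ℝ) + 2) / 4 * f (x k)
      ≤ s * (k:ℝ) * ((k:ℝ) + 2) / 4 * (f (y k) + ⟪g (x k), x k - y k⟫
          - s / 2 * (‖g (x k)‖ ^ 2 - 2 * ⟪g (x k), g (y k)⟫ + ‖g (y k)‖ ^ 2)) :=
    mul_le_mul_of_nonneg_left I3 (by positivity)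
  simp only [nagE]
  push_cast
  rw [hnorm, hinner, eGH, ePS]
  linarith [J1, J2, J3]

end aux

lemma nag_sum_sq (k : ℕ) (hk : 1 ≤ k) :
    ((k:ℝ) + 1) ^ 3 / 21 ≤ ∑ i ∈ Finset.Icc 1 k, ((i:ℝ) + 1) ^ 2 := by
  induction k, hk using Nat.le_induction with
  | base => norm_num
  | succ m hm ih =>
    rw [Finset.sum_Icc_succ_top (by omega : 1 ≤ m + 1)]
    have hm' : (1:ℝ) ≤ (m:ℝ) := Nat.one_le_cast.mpr hm
    push_cast
    push_cast at ih
    nlinarith [ih, hm']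

set_option maxHeartbeats 1000000 in
/-- Convergence theorem for the modified NAG-C method. -/
theorem modified_nag_c_convergence {n : ℕ}
    (f : EuclideanSpace ℝ (Fin n) → ℝ)
    (g : EuclideanSpace ℝ (Fin n) → EuclideanSpace ℝ (Fin n))
    (L s : ℝ) (hL : 0 < L)
    (hgrad : ∀ x, HasGradientAt f (g x) x)
    (hconv : ConvexOn ℝ Set.univ f)
    (hlip : ∀ a b, ‖g a - g b‖ ≤ L * ‖a - b‖)
    (xstar : EuclideanSpace ℝ (Fin n)) (hmin : ∀ z, f xstar ≤ f z)
    (hs : 0 < s) (hsL : s ≤ 1 / L)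
    (x y : ℕ → EuclideanSpace ℝ (Fin n)) (h0 : x 0 = y 0)
    (hy : ∀ k : ℕ, y (k + 1) = x k - s • g (x k))
    (hx : ∀ k : ℕ, x (k + 1) = y (k + 1) + ((k : ℝ) / ((k : ℝ) + 3)) • (y (k + 1) - y k)
          - s • (((k : ℝ) / ((k : ℝ) + 3)) • g (y (k + 1))
                  - (((k : ℝ) - 1) / ((k : ℝ) + 3)) • g (y k))) :
    ∀ k : ℕ,
      (∃ i ≤ k, ‖g (x i) + g (y i)‖ ^ 2
          ≤ 882 * ‖x 0 - xstar‖ ^ 2 / (s ^ 2 * ((k : ℝ) + 1) ^ 3)) ∧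
      f (y k) - f xstar ≤ 21 * ‖x 0 - xstar‖ ^ 2 / (s * ((k : ℝ) + 1) ^ 2) := by
  have hLs : s * L ≤ 1 := (le_div_iff₀ hL).mp hsL
  have hR : (0:ℝ) ≤ ‖x 0 - xstar‖ := norm_nonneg _
  -- gradient at minimizer is zero
  have hgstar : g xstar = 0 := by
    have hloc : IsLocalMin f xstar := Filter.Eventually.of_forall hmin
    have hz := hloc.hasFDerivAt_eq_zero (hasGradientAt_iff_hasFDerivAt.mp (hgrad xstar))
    have := congrArg (InnerProductSpace.toDual ℝ (EuclideanSpace ℝ (Fin n))).symm hz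
    simpa using this
  have hstep := nag_step hgrad hconv hL hlip xstar hgstar hs hsL x y hy hx
  have hFnn : ∀ k : ℕ, 0 ≤ f (y k) - f xstar := fun k => sub_nonneg.mpr (hmin _)
  have hgxy0 : g (x 0) = g (y 0) := by rw [h0]
  have hEnn : ∀ k : ℕ, 0 ≤ nagE f g s x y xstar k := by
    intro k
    simp only [nagE]
    have h1 : 0 ≤ s * ((k:ℝ) + 1) ^ 2 / 4 * (f (y k) - f xstar) :=
      mul_nonneg (by positivity) (hFnn k)
    positivity
  -- monotonicity of the energy
  have hEmono : ∀ k : ℕ, nagE f g s x y xstar (k + 1) ≤ nagE f g s x y xstar k := by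
    intro k
    rcases Nat.eq_zero_or_pos k with hk0 | hk1
    · subst hk0
      have h := hstep 0
      push_cast at h
      rw [hgxy0] at h
      have e1 : ‖g (y 0) + g (y 0)‖ ^ 2 = 4 * ‖g (y 0)‖ ^ 2 := by
        rw [norm_add_sq_real, real_inner_self_eq_norm_sq]; ring
      have e2 : ‖(((0:ℝ) + 3) / 4) • g (y 0) - (((0:ℝ) + 1) / 4) • g (y 0)‖ ^ 2
          = 1 / 4 * ‖g (y 0)‖ ^ 2 := by
        have e : (((0:ℝ) + 3) / 4) • g (y 0) - (((0:ℝ) + 1) / 4) • g (y 0)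
            = ((1:ℝ) / 2) • g (y 0) := by module
        rw [e, norm_smul, Real.norm_eq_abs, mul_pow, sq_abs]
        norm_num
      rw [e1, e2] at h
      have t1 : 0 ≤ s / 4 * (f (y 0) - f xstar) := mul_nonneg (by positivity) (hFnn 0)
      nlinarith [h, t1]
    · have h := hstep k
      have hc : (1:ℝ) ≤ (k:ℝ) := Nat.one_le_cast.mpr hk1
      have t1 : 0 ≤ s / 4 * (f (y k) - f xstar) := mul_nonneg (by positivity) (hFnn k)
      have t2 : 0 ≤ s ^ 2 * (((k:ℝ) ^ 2 + 2 * (k:ℝ) - 1) / 16) * ‖g (x k) + g (y k)‖ ^ 2 := by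
        apply mul_nonneg (mul_nonneg (by positivity) (by nlinarith)) (sq_nonneg _)
      have t3 : 0 ≤ s ^ 2 * ‖(((k:ℝ) + 3) / 4) • g (x k) - (((k:ℝ) + 1) / 4) • g (y k)‖ ^ 2 := by
        positivity
      linarith
  have hEle : ∀ k : ℕ, nagE f g s x y xstar k ≤ nagE f g s x y xstar 0 := by
    intro k
    induction k with
    | zero => exact le_refl _
    | succ m ih => exact (hEmono m).trans ih
  -- bound on the initial energy
  have hgy0 : ‖g (y 0)‖ ≤ L * ‖x 0 - xstar‖ := by
    rw [← hgxy0]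
    calc ‖g (x 0)‖ = ‖g (x 0) - g xstar‖ := by rw [hgstar, sub_zero]
      _ ≤ L * ‖x 0 - xstar‖ := hlip _ _
  have hW0 : nagW g s x y xstar 0 = (x 0 - xstar) + (-(s / 2)) • g (y 0) := by
    simp only [nagW, Nat.cast_zero]
    module
  have hnW0 : ‖nagW g s x y xstar 0‖ ≤ 3 / 2 * ‖x 0 - xstar‖ := by
    rw [hW0]
    calc ‖(x 0 - xstar) + (-(s / 2)) • g (y 0)‖
        ≤ ‖x 0 - xstar‖ + ‖(-(s / 2)) • g (y 0)‖ := norm_add_le _ _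
      _ = ‖x 0 - xstar‖ + s / 2 * ‖g (y 0)‖ := by
          rw [norm_smul, Real.norm_eq_abs, abs_neg, abs_of_pos (by positivity)]
      _ ≤ 3 / 2 * ‖x 0 - xstar‖ := by nlinarith [hgy0, norm_nonneg (g (y 0)), hs.le, hLs, hR]
  have hf0 : f (y 0) - f xstar ≤ L / 2 * ‖x 0 - xstar‖ ^ 2 := by
    have hd := nagc_descent hgrad hL hlip xstar (x 0)
    rw [hgstar, inner_zero_left] at hd
    have hfy : f (y 0) = f (x 0) := by rw [h0]
    have hnx : ‖x 0 - xstar‖ ^ 2 = ‖x 0 - xstar‖ ^ 2 := rfl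
    rw [hfy]
    linarith [hd]
  have hE0 : nagE f g s x y xstar 0 ≤ 5 / 4 * ‖x 0 - xstar‖ ^ 2 := by
    simp only [nagE, Nat.cast_zero]
    have hsq : ‖nagW g s x y xstar 0‖ ^ 2 ≤ (3 / 2 * ‖x 0 - xstar‖) ^ 2 :=
      pow_le_pow_left₀ (norm_nonneg _) hnW0 2
    have h1 : s / 4 * (f (y 0) - f xstar) ≤ s / 4 * (L / 2 * ‖x 0 - xstar‖ ^ 2) :=
      mul_le_mul_of_nonneg_left hf0 (by positivity)
    have h2 : (s * L) * ‖x 0 - xstar‖ ^ 2 ≤ 1 * ‖x 0 - xstar‖ ^ 2 :=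
      mul_le_mul_of_nonneg_right hLs (sq_nonneg _)
    norm_num
    linarith [h1, h2, hsq]
  -- telescoping sum
  have hsum : ∀ m : ℕ,
      (∑ i ∈ Finset.Icc 1 m, s ^ 2 * ((i:ℝ) + 1) ^ 2 / 32 * ‖g (x i) + g (y i)‖ ^ 2)
        ≤ nagE f g s x y xstar 1 - nagE f g s x y xstar (m + 1) := by
    intro m
    induction m with
    | zero => simp
    | succ m ih =>
      rw [Finset.sum_Icc_succ_top (by omega : 1 ≤ m + 1)]
      have h := hstep (m + 1)
      have hc : (1:ℝ) ≤ ((m + 1 : ℕ):ℝ) := by push_cast; linarith [Nat.cast_nonneg (α := ℝ) m]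
      have t1 : 0 ≤ s / 4 * (f (y (m + 1)) - f xstar) := mul_nonneg (by positivity) (hFnn _)
      have t3 : 0 ≤ s ^ 2 * ‖((((m + 1 : ℕ):ℝ) + 3) / 4) • g (x (m + 1))
          - ((((m + 1 : ℕ):ℝ) + 1) / 4) • g (y (m + 1))‖ ^ 2 := by positivity
      have hcoef : s ^ 2 * (((m + 1 : ℕ):ℝ) + 1) ^ 2 / 32
            * ‖g (x (m + 1)) + g (y (m + 1))‖ ^ 2
          ≤ s ^ 2 * ((((m + 1 : ℕ):ℝ) ^ 2 + 2 * ((m + 1 : ℕ):ℝ) - 1) / 16)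
            * ‖g (x (m + 1)) + g (y (m + 1))‖ ^ 2 := by
        apply mul_le_mul_of_nonneg_right _ (sq_nonneg _)
        have hpoly : (0:ℝ) ≤ ((m + 1 : ℕ):ℝ) ^ 2 + 2 * ((m + 1 : ℕ):ℝ) - 3 := by nlinarith [hc]
        linarith [mul_nonneg (sq_nonneg s) hpoly]
      push_cast at hcoef h ih t3 ⊢
      linarith [h, ih, t1, t3, hcoef]
  intro k
  constructor
  · -- gradient norm bound
    rcases Nat.eq_zero_or_pos k with hk0 | hk1
    · subst hk0
      refine ⟨0, le_refl 0, ?_⟩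
      rw [hgxy0]
      have e1 : ‖g (y 0) + g (y 0)‖ ^ 2 = 4 * ‖g (y 0)‖ ^ 2 := by
        rw [norm_add_sq_real, real_inner_self_eq_norm_sq]; ring
      rw [e1, le_div_iff₀ (by positivity)]
      have hg2 : ‖g (y 0)‖ ^ 2 ≤ (L * ‖x 0 - xstar‖) ^ 2 := by
        apply pow_le_pow_left₀ (norm_nonneg _) hgy0
      have hsL2 : (s * L) ^ 2 ≤ 1 := by nlinarith [hLs, mul_nonneg hs.le hL.le]
      have c1 : ‖g (y 0)‖ ^ 2 * s ^ 2 ≤ (L * ‖x 0 - xstar‖) ^ 2 * s ^ 2 :=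
        mul_le_mul_of_nonneg_right hg2 (sq_nonneg s)
      have c3 : (s * L) ^ 2 * ‖x 0 - xstar‖ ^ 2 ≤ 1 * ‖x 0 - xstar‖ ^ 2 :=
        mul_le_mul_of_nonneg_right hsL2 (sq_nonneg _)
      push_cast
      nlinarith [c1, c3, sq_nonneg ‖x 0 - xstar‖]
    · obtain ⟨i, hmem, hminn⟩ := Finset.exists_min_image (Finset.Icc 1 k)
        (fun j => ‖g (x j) + g (y j)‖ ^ 2) ⟨1, Finset.mem_Icc.mpr ⟨le_refl 1, hk1⟩⟩
      refine ⟨i, (Finset.mem_Icc.mp hmem).2, ?_⟩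
      have hsum1 : (∑ j ∈ Finset.Icc 1 k, s ^ 2 * ((j:ℝ) + 1) ^ 2 / 32)
            * ‖g (x i) + g (y i)‖ ^ 2
          ≤ ∑ j ∈ Finset.Icc 1 k, s ^ 2 * ((j:ℝ) + 1) ^ 2 / 32 * ‖g (x j) + g (y j)‖ ^ 2 := by
        rw [Finset.sum_mul]
        apply Finset.sum_le_sum
        intro j hj
        exact mul_le_mul_of_nonneg_left (hminn j hj) (by positivity)
      have hsum2 : (∑ j ∈ Finset.Icc 1 k, s ^ 2 * ((j:ℝ) + 1) ^ 2 / 32)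
          = s ^ 2 / 32 * ∑ j ∈ Finset.Icc 1 k, ((j:ℝ) + 1) ^ 2 := by
        rw [Finset.mul_sum]
        apply Finset.sum_congr rfl
        intro j _
        ring
      have hS := nag_sum_sq k hk1
      have hEb : ∑ j ∈ Finset.Icc 1 k, s ^ 2 * ((j:ℝ) + 1) ^ 2 / 32 * ‖g (x j) + g (y j)‖ ^ 2
          ≤ 5 / 4 * ‖x 0 - xstar‖ ^ 2 := by
        have h1 := hsum k
        have h2 := hEnn (k + 1)
        have h3 := hEle 1
        linarith [hE0]
      rw [le_div_iff₀ (by positivity)]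
      have hmn : 0 ≤ ‖g (x i) + g (y i)‖ ^ 2 := sq_nonneg _
      have c1 : s ^ 2 / 32 * (((k:ℝ) + 1) ^ 3 / 21) * ‖g (x i) + g (y i)‖ ^ 2
          ≤ s ^ 2 / 32 * (∑ j ∈ Finset.Icc 1 k, ((j:ℝ) + 1) ^ 2)
              * ‖g (x i) + g (y i)‖ ^ 2 := by
        apply mul_le_mul_of_nonneg_right _ hmn
        exact mul_le_mul_of_nonneg_left hS (by positivity)
      have c2 : s ^ 2 / 32 * (∑ j ∈ Finset.Icc 1 k, ((j:ℝ) + 1) ^ 2)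
            * ‖g (x i) + g (y i)‖ ^ 2 ≤ 5 / 4 * ‖x 0 - xstar‖ ^ 2 := by
        calc s ^ 2 / 32 * (∑ j ∈ Finset.Icc 1 k, ((j:ℝ) + 1) ^ 2) * ‖g (x i) + g (y i)‖ ^ 2
            = (∑ j ∈ Finset.Icc 1 k, s ^ 2 * ((j:ℝ) + 1) ^ 2 / 32)
                * ‖g (x i) + g (y i)‖ ^ 2 := by rw [hsum2]
          _ ≤ _ := hsum1.trans hEb
      linarith [c1, c2, sq_nonneg ‖x 0 - xstar‖]
  · -- function value bound
    rw [le_div_iff₀ (by positivity)]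
    have h1 := hEle k
    have h2 : s * ((k:ℝ) + 1) ^ 2 / 4 * (f (y k) - f xstar) ≤ nagE f g s x y xstar k := by
      simp only [nagE]
      linarith [sq_nonneg ‖nagW g s x y xstar k‖]
    linarith [h2, h1, hE0, sq_nonneg ‖x 0 - xstar‖]
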